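/- arXiv:1906.00436 — 6 statements merged into one kernel-verified Lean document; each statement's English description precedes it below -/
import Mathlib

section
/- Let ψ : X → ℝ be a strongly convex function on a closed convex set X. Then the convex conjugate ψ*(z) = sup_{x∈X}{⟨z,x⟩ - ψ(x)} is differentiable, and ∇ψ*(z) = argmax_{x∈X}{⟨z,x⟩ - ψ(x)} for every z in the dual space. -/
set_option maxHeartbeats 2000000 in
/-- Danskin-type fact: if `ψ : X → ℝ` is (`μ`-)strongly convex on a nonempty closed convex
set `X` in a finite-dimensional normed space, then the convex conjugate
`ψ*(z) = sup_{x ∈ X}{⟨z, x⟩ - ψ x}` is differentiable, and for every dual vector `z` its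
gradient is the (unique) maximizer `argmax_{x ∈ X}{⟨z, x⟩ - ψ x}`; the gradient of
`ψ* : E* → ℝ` at `z` is the evaluation functional `w ↦ w m` of the maximizer `m ∈ E`. -/
theorem stmt_5 {E : Type*} [NormedAddCommGroup E] [NormedSpace ℝ E] [FiniteDimensional ℝ E]
    (X : Set E) (hXc : IsClosed X) (hXconv : Convex ℝ X) (hXne : X.Nonempty)
    (ψ : E → ℝ) (hcont : ContinuousOn ψ X) (μ : ℝ) (hμ : 0 < μ)
    (hsc : ∀ x ∈ X, ∀ y ∈ X, ∀ t ∈ Set.Icc (0 : ℝ) 1,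
      ψ (t • x + (1 - t) • y) ≤ t * ψ x + (1 - t) * ψ y - μ / 2 * t * (1 - t) * ‖x - y‖ ^ 2)
    (ψs : (E →L[ℝ] ℝ) → ℝ)
    (hψs : ∀ z, ψs z = sSup {v : ℝ | ∃ x ∈ X, v = z x - ψ x}) :
    ∀ z : E →L[ℝ] ℝ, ∃ m ∈ X,
      (∀ x ∈ X, z x - ψ x ≤ z m - ψ m) ∧
      (∀ m' ∈ X, (∀ x ∈ X, z x - ψ x ≤ z m' - ψ m') → m' = m) ∧
      HasFDerivAt ψs (ContinuousLinearMap.apply ℝ ℝ m) z := by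
  -- existence of maximizers for every dual vector
  have hex : ∀ w : E →L[ℝ] ℝ, ∃ m ∈ X, ∀ x ∈ X, w x - ψ x ≤ w m - ψ m := by
    intro w
    obtain ⟨x0, hx0⟩ := hXne
    have hK1 : IsCompact (X ∩ Metric.closedBall x0 1) :=
      (isCompact_closedBall x0 1).inter_left hXc
    obtain ⟨p0, hp0, hp0min⟩ := hK1.exists_isMinOn ⟨x0, hx0, by simp⟩
      (hcont.mono Set.inter_subset_left)
    set c : ℝ := ψ p0 with hc
    set R : ℝ := max 1 (1 + 2/μ * (‖w‖ + |c| + |ψ x0|)) with hR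
    have hR1 : (1:ℝ) ≤ R := le_max_left _ _
    have hKR : IsCompact (X ∩ Metric.closedBall x0 R) :=
      (isCompact_closedBall x0 R).inter_left hXc
    obtain ⟨m, hm, hmmax⟩ := hKR.exists_isMaxOn
      ⟨x0, hx0, by simp [Metric.mem_closedBall]; linarith⟩
      (w.continuous.continuousOn.sub (hcont.mono Set.inter_subset_left))
    refine ⟨m, hm.1, fun y hy => ?_⟩
    by_cases hyb : y ∈ Metric.closedBall x0 R
    · exact hmmax ⟨hy, hyb⟩
    · -- coercivity: f y ≤ f x0 ≤ f m
      have hfx0 : w x0 - ψ x0 ≤ w m - ψ m :=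
        hmmax ⟨hx0, by simp [Metric.mem_closedBall]; linarith⟩
      refine le_trans ?_ hfx0
      set r : ℝ := ‖y - x0‖ with hrdef
      have hrR : R < r := by
        simpa [Metric.mem_closedBall, dist_eq_norm, not_le] using hyb
      have hr1 : (1:ℝ) < r := lt_of_le_of_lt hR1 hrR
      have hr0 : (0:ℝ) < r := by linarith
      set t : ℝ := 1/r with ht
      have ht01 : t ∈ Set.Icc (0:ℝ) 1 := by
        constructor
        · positivity
        · rw [ht]; rw [div_le_one hr0]; linarith
      set pt : E := t • y + (1 - t) • x0 with hpt
      have hptX : pt ∈ X := hXconv hy hx0 ht01.1 (by linarith [ht01.2]) (by ring)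
      have hptb : pt ∈ Metric.closedBall x0 1 := by
        have : pt - x0 = t • (y - x0) := by
          rw [hpt]; module
        rw [Metric.mem_closedBall, dist_eq_norm, this, norm_smul]
        rw [Real.norm_eq_abs, abs_of_pos (by positivity : (0:ℝ) < t)]
        rw [ht, ← hrdef]
        rw [one_div, inv_mul_cancel₀ (ne_of_gt hr0)]
      have hcpt : c ≤ ψ pt := hp0min ⟨hptX, hptb⟩
      have hstrong := hsc y hy x0 hx0 t ht01
      rw [← hpt, ← hrdef] at hstrong
      have hwy : w y ≤ w x0 + ‖w‖ * r := by
        have h1 : w y - w x0 = w (y - x0) := by rw [map_sub]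
        have h2 : w (y - x0) ≤ ‖w‖ * ‖y - x0‖ :=
          le_trans (le_abs_self _) (w.le_opNorm (y - x0))
        rw [← hrdef] at h2; linarith
      -- lower bound on ψ y
      have htr : t * r = 1 := by rw [ht]; field_simp
      have hpsy : c * r + (1 - r) * ψ x0 + μ/2 * (r - 1) * r ≤ ψ y := by
        have h := mul_le_mul_of_nonneg_left hstrong (le_of_lt hr0)
        have hid : r * (t * ψ y + (1 - t) * ψ x0 - μ / 2 * t * (1 - t) * r ^ 2)
            = ψ y + (r - 1) * ψ x0 - μ/2 * (r - 1) * r := by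
          rw [ht]; field_simp
        rw [hid] at h
        have hcr := mul_le_mul_of_nonneg_left hcpt (le_of_lt hr0)
        linarith
      -- conclude
      have hRbound : ‖w‖ + |c| + |ψ x0| ≤ μ/2 * (R - 1) := by
        have h1 : 2/μ * (‖w‖ + |c| + |ψ x0|) ≤ R - 1 := by
          have := le_max_right (1:ℝ) (1 + 2/μ * (‖w‖ + |c| + |ψ x0|))
          rw [hR]; linarith
        have h2 : μ/2 * (2/μ * (‖w‖ + |c| + |ψ x0|)) = ‖w‖ + |c| + |ψ x0| := by
          field_simp
        have h3 := mul_le_mul_of_nonneg_left h1 (le_of_lt (half_pos hμ))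
        linarith
      have hA : ‖w‖ + |c| + |ψ x0| ≤ μ/2 * (r - 1) := by
        nlinarith [hRbound, mul_pos hμ (sub_pos.mpr hrR)]
      have hAr := mul_le_mul_of_nonneg_right hA (le_of_lt hr0)
      have hcr2 : -|c| * r ≤ c * r := mul_le_mul_of_nonneg_right (neg_abs_le c) (le_of_lt hr0)
      have hpxr : ψ x0 * r ≤ |ψ x0| * r := mul_le_mul_of_nonneg_right (le_abs_self _) (le_of_lt hr0)
      nlinarith [hpsy, hwy, hAr, hcr2, hpxr]
  -- quadratic growth at a maximizer
  have hgrow : ∀ w : E →L[ℝ] ℝ, ∀ m ∈ X, (∀ x ∈ X, w x - ψ x ≤ w m - ψ m) →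
      ∀ y ∈ X, w y - ψ y + μ/4 * ‖m - y‖^2 ≤ w m - ψ m := by
    intro w m hm hmax y hy
    have hmid := hsc m hm y hy (1/2) (by norm_num)
    have hmidX : (1/2 : ℝ) • m + (1 - 1/2 : ℝ) • y ∈ X :=
      hXconv hm hy (by norm_num) (by norm_num) (by norm_num)
    have h1 := hmax _ hmidX
    have h2 : w ((1/2 : ℝ) • m + (1 - 1/2 : ℝ) • y) = (1/2) * w m + (1/2) * w y := by
      rw [map_add, map_smul, map_smul]; norm_num
    rw [h2] at h1
    nlinarith [h1, hmid]
  -- sSup equals the value at the maximizer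
  have hsup : ∀ w : E →L[ℝ] ℝ, ∀ m ∈ X, (∀ x ∈ X, w x - ψ x ≤ w m - ψ m) →
      ψs w = w m - ψ m := by
    intro w m hm hmax
    rw [hψs w]
    apply IsGreatest.csSup_eq
    constructor
    · exact ⟨m, hm, rfl⟩
    · rintro v ⟨x, hx, rfl⟩; exact hmax x hx
  intro z
  obtain ⟨m, hm, hmax⟩ := hex z
  refine ⟨m, hm, hmax, ?_, ?_⟩
  · intro m' hm' hmax'
    have h1 := hgrow z m hm hmax m' hm'
    have h2 := hmax' m hm
    have : ‖m - m'‖^2 ≤ 0 := by nlinarith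
    have : ‖m - m'‖ = 0 := by nlinarith [norm_nonneg (m - m'), sq_nonneg ‖m - m'‖]
    have := norm_eq_zero.mp this
    have : m = m' := by rwa [sub_eq_zero] at this
    exact this.symm
  · -- differentiability
    rw [hasFDerivAt_iff_isLittleO_nhds_zero]
    rw [Asymptotics.isLittleO_iff]
    intro ε hε
    rw [Metric.eventually_nhds_iff]
    refine ⟨μ * ε / 2, by positivity, fun h hh => ?_⟩
    obtain ⟨m', hm', hmax'⟩ := hex (z + h)
    -- Lipschitz bound: μ/2 ‖m - m'‖^2 ≤ h (m' - m) ≤ ‖h‖ ‖m' - m‖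
    have hg1 := hgrow z m hm hmax m' hm'
    have hg2 := hgrow (z + h) m' hm' hmax' m hm
    simp only [ContinuousLinearMap.add_apply] at hg2
    have hnorm_symm : ‖m' - m‖ = ‖m - m'‖ := norm_sub_rev _ _
    have hhb : h (m' - m) ≤ ‖h‖ * ‖m - m'‖ := by
      calc h (m' - m) ≤ ‖h‖ * ‖m' - m‖ := le_trans (le_abs_self _) (h.le_opNorm _)
        _ = ‖h‖ * ‖m - m'‖ := by rw [hnorm_symm]
    have hlip : μ/2 * ‖m - m'‖^2 ≤ ‖h‖ * ‖m - m'‖ := by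
      have hms : h m' - h m = h (m' - m) := by rw [map_sub]
      rw [hnorm_symm] at hg2
      linarith [hg1, hg2, hhb, hms]
    have hdist : ‖m - m'‖ ≤ 2/μ * ‖h‖ := by
      rcases eq_or_lt_of_le (norm_nonneg (m - m')) with h0 | h0
      · rw [← h0]; positivity
      · have hlip' : (μ/2 * ‖m - m'‖) * ‖m - m'‖ ≤ ‖h‖ * ‖m - m'‖ := by nlinarith [hlip, sq_nonneg ‖m - m'‖]
        have hmul : μ/2 * ‖m - m'‖ ≤ ‖h‖ := le_of_mul_le_mul_right hlip' h0
        rw [div_mul_eq_mul_div, le_div_iff₀ hμ]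
        linarith [hmul]
    -- error bounds
    have hv1 : ψs (z + h) = (z + h) m' - ψ m' := hsup _ m' hm' hmax'
    have hv2 : ψs z = z m - ψ m := hsup _ m hm hmax
    have hlow : 0 ≤ ψs (z + h) - ψs z - h m := by
      have := hmax' m hm
      simp only [ContinuousLinearMap.add_apply] at this hv1
      rw [hv1, hv2]; linarith
    have hupp : ψs (z + h) - ψs z - h m ≤ ‖h‖ * ‖m - m'‖ := by
      have := hmax m' hm'
      simp only [ContinuousLinearMap.add_apply] at hv1
      have hhm' : h m' - h m = h (m' - m) := by rw [map_sub]
      rw [hv1, hv2]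
      nlinarith [this, hhb, hhm']
    have hhnorm : ‖h‖ < μ * ε / 2 := by
      simpa [dist_eq_norm] using hh
    simp only [ContinuousLinearMap.apply_apply, id_eq]
    rw [Real.norm_eq_abs, abs_of_nonneg hlow]
    calc ψs (z + h) - ψs z - h m ≤ ‖h‖ * ‖m - m'‖ := hupp
      _ ≤ ‖h‖ * (2/μ * ‖h‖) := by
          apply mul_le_mul_of_nonneg_left hdist (norm_nonneg _)
      _ ≤ ε * ‖h‖ := by
          have h1 : 2/μ * ‖h‖ ≤ ε := by
            rw [div_mul_eq_mul_div, div_le_iff₀ hμ]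
            nlinarith [hhnorm]
          have := mul_le_mul_of_nonneg_left h1 (norm_nonneg h)
          linarith [this]
end

section
/- Consider the discrete method x_k = θ'_k-weighted combination: x_k = (H_{k-1}/H_k)/(H_{k-1}/H_k + a_k/A_k) · y_{k-1} + (a_k/A_k)/(H_{k-1}/H_k + a_k/A_k) · ∇ψ*(z_{k-1}), z_k = z_{k-1} - H_k (a_k/A_k) ∇f(x_k), y_k = x_k + (a_k/A_k)(∇ψ*(z_k) - ∇ψ*(z_{k-1})), with y_0 = ∇ψ*(z_0) ∈ rel int X, μ ≤ L, A_k = Σ_{i=0}^k a_i, (a_k/A_k)² = cμ/(L H_k) for some c ∈ (0,1], and H_k = A_k^λ with λ ∈ [0,1]. Then y_k ∈ X for all k ≥ 0. -/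
/-- Feasibility of the GMD_f iterates: for the method
`x_k = θ'-combination of y_{k-1} and ∇ψ*(z_{k-1})`,
`z_k = z_{k-1} - H_k (a_k/A_k) ∇f(x_k)`,
`y_k = x_k + (a_k/A_k)(∇ψ*(z_k) - ∇ψ*(z_{k-1}))`,
with `y₀ = ∇ψ*(z₀) ∈ X`, `μ ≤ L`, `A_k = Σ_{i≤k} a_i`, `(a_k/A_k)² = cμ/(L H_k)` for
`c ∈ (0,1]`, and `H_k = A_k^λ`, `λ ∈ [0,1]`, all iterates `y_k` remain in the closed
convex set `X` (here `∇ψ*` is encoded as a map `gs` into `X`). -/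
theorem stmt_10 {E : Type*} [NormedAddCommGroup E] [NormedSpace ℝ E] [FiniteDimensional ℝ E]
    (X : Set E) (hXc : IsClosed X) (hXconv : Convex ℝ X)
    (f : E → ℝ) (g : E → E →L[ℝ] ℝ) (hdiff : ∀ p ∈ X, HasFDerivAt f (g p) p)
    (gs : (E →L[ℝ] ℝ) → E) (hgsX : ∀ w, gs w ∈ X)
    (a A H : ℕ → ℝ) (lam c μ L : ℝ)
    (hapos : ∀ k, 0 < a k) (hApos : ∀ k, 0 < A k) (hHpos : ∀ k, 0 < H k)
    (hA : ∀ k, A k = ∑ i ∈ Finset.range (k + 1), a i)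
    (hlam : lam ∈ Set.Icc (0 : ℝ) 1) (hH : ∀ k, H k = (A k) ^ lam)
    (hμ : 0 < μ) (hμL : μ ≤ L) (hc : c ∈ Set.Ioc (0 : ℝ) 1)
    (hstep : ∀ k, (a k / A k) ^ 2 = c * μ / (L * H k))
    (x y : ℕ → E) (z : ℕ → E →L[ℝ] ℝ)
    (hy0 : y 0 = gs (z 0))
    (hx : ∀ k ≥ 1, x k =
      ((H (k - 1) / H k) / (H (k - 1) / H k + a k / A k)) • y (k - 1)
        + ((a k / A k) / (H (k - 1) / H k + a k / A k)) • gs (z (k - 1)))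
    (hz : ∀ k ≥ 1, z k = z (k - 1) - (H k * (a k / A k)) • g (x k))
    (hy : ∀ k ≥ 1, y k = x k + (a k / A k) • (gs (z k) - gs (z (k - 1)))) :
    ∀ k, y k ∈ X := by
  have hL : 0 < L := lt_of_lt_of_le hμ hμL
  have hAsucc : ∀ k, A (k + 1) = A k + a (k + 1) := by
    intro k
    rw [hA (k + 1), hA k, Finset.sum_range_succ]
  have hθpos : ∀ k, 0 < a k / A k := fun k => div_pos (hapos k) (hApos k)
  have hθle1 : ∀ k, a k / A k ≤ 1 := by
    intro k
    rw [div_le_one (hApos k), hA k]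
    exact Finset.single_le_sum (fun i _ => (hapos i).le)
      (Finset.self_mem_range_succ k)
  have hθ0 : a 0 / A 0 = 1 := by
    rw [hA 0, Finset.sum_range_one, div_self (hapos 0).ne']
  have hθlt1 : ∀ k, a (k + 1) / A (k + 1) < 1 := by
    intro k
    rw [div_lt_one (hApos (k + 1)), hAsucc k]
    linarith [hApos k]
  -- monotonicity of θ
  have hθmono : ∀ k, a (k + 1) / A (k + 1) ≤ a k / A k := by
    intro k
    have hHle : H k ≤ H (k + 1) := by
      rw [hH k, hH (k + 1)]
      exact Real.rpow_le_rpow (hApos k).le (by linarith [hAsucc k, hapos (k + 1)])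
        hlam.1
    have hsq : (a (k + 1) / A (k + 1)) ^ 2 ≤ (a k / A k) ^ 2 := by
      rw [hstep k, hstep (k + 1)]
      apply div_le_div_of_nonneg_left (mul_pos hc.1 hμ).le
        (mul_pos hL (hHpos k))
      exact mul_le_mul_of_nonneg_left hHle hL.le
    nlinarith [hθpos k, hθpos (k + 1)]
  have main : ∀ k, ∃ u ∈ X, y k = (1 - a k / A k) • u + (a k / A k) • gs (z k) := by
    intro k
    induction k with
    | zero =>
      refine ⟨gs (z 0), hgsX _, ?_⟩
      rw [hy0, hθ0]
      simp
    | succ k ih =>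
      obtain ⟨u, huX, hu⟩ := ih
      set θ := a (k + 1) / A (k + 1) with hθdef
      set θ' := a k / A k with hθ'def
      set r := H k / H (k + 1) with hrdef
      have hr : 0 < r := div_pos (hHpos k) (hHpos (k + 1))
      have hθp : 0 < θ := hθpos (k + 1)
      have hθ'p : 0 < θ' := hθpos k
      have hd : 0 < r + θ := by linarith
      have h1θ : 0 < 1 - θ := by linarith [hθlt1 k]
      have hθ'1 : θ' ≤ 1 := hθle1 k
      have hθθ' : θ ≤ θ' := hθmono k
      rw [hy (k + 1) (by omega), hx (k + 1) (by omega)]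
      simp only [Nat.add_sub_cancel]
      rw [hu]
      simp only [← hθdef, ← hθ'def, ← hrdef]
      clear_value θ θ' r
      set α := r / (r + θ) * (1 - θ') / (1 - θ) with hαdef
      have hα0 : 0 ≤ α := div_nonneg (mul_nonneg (div_nonneg hr.le hd.le)
        (by linarith)) h1θ.le
      have hα1 : α ≤ 1 := by
        rw [hαdef, div_le_one h1θ, div_mul_eq_mul_div, div_le_iff₀ hd]
        nlinarith [mul_nonneg hr.le (sub_nonneg.2 hθθ'),
          mul_nonneg hθp.le h1θ.le]
      refine ⟨α • u + (1 - α) • gs (z k),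
        hXconv huX (hgsX _) hα0 (by linarith) (by ring), ?_⟩
      match_scalars
      · rw [hαdef]
        field_simp
      · rw [hαdef]
        field_simp
        ring
      · ring
  intro k
  obtain ⟨u, huX, hu⟩ := main k
  rw [hu]
  exact hXconv huX (hgsX _) (by linarith [hθle1 k]) (hθpos k).le (by ring)
end

section
/- Let C_k = B_k f(y_k) - Σ_{i=0}^k b_i f(y_i) + Σ_{i=0}^k a_i D_{ψ*}(z_k, z_i) and E_k = C_k - C_{k-1}, where a_i, b_i > 0, A_k = Σ_{i=0}^k a_i, B_k = Σ_{i=0}^k b_i. Then for every k ≥ 0: (1/B_k) Σ_{i=0}^k b_i f(y_i) = f(y_0) - Σ_{i=1}^k (1/B_{i-1} - 1/B_i) Σ_{j=0}^{i-1} a_j D_{ψ*}(z_i, z_j) + Σ_{i=1}^k (1/B_{i-1} - 1/B_k) E_i. -/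
/-- Structural lemma: with `C_k = B_k f(y_k) - Σ_{i=0}^k b_i f(y_i) + Σ_{i=0}^k a_i D_{ψ*}(z_k, z_i)`
and `E_k = C_k - C_{k-1}`, where `a_i, b_i > 0`, `A_k = Σ_{i≤k} a_i`, `B_k = Σ_{i≤k} b_i`,
one has for every `k ≥ 0`:
`(1/B_k) Σ_{i=0}^k b_i f(y_i) = f(y₀) - Σ_{i=1}^k (1/B_{i-1} - 1/B_i) Σ_{j=0}^{i-1} a_j D_{ψ*}(z_i, z_j) + Σ_{i=1}^k (1/B_{i-1} - 1/B_k) E_i`.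
(`D` is the Bregman divergence of a differentiable convex function on the dual space;
in particular `D w w = 0`.) -/
theorem stmt_13 {E F : Type*} [NormedAddCommGroup E] [NormedAddCommGroup F]
    (f : E → ℝ) (y : ℕ → E) (z : ℕ → F)
    (D : F → F → ℝ) (hD0 : ∀ w, D w w = 0)
    (a b A B : ℕ → ℝ)
    (hapos : ∀ i, 0 < a i) (hbpos : ∀ i, 0 < b i)
    (hA : ∀ k, A k = ∑ i ∈ Finset.range (k + 1), a i)
    (hB : ∀ k, B k = ∑ i ∈ Finset.range (k + 1), b i)
    (C Err : ℕ → ℝ)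
    (hC : ∀ k, C k = B k * f (y k) - ∑ i ∈ Finset.range (k + 1), b i * f (y i)
      + ∑ i ∈ Finset.range (k + 1), a i * D (z k) (z i))
    (hErr : ∀ k ≥ 1, Err k = C k - C (k - 1)) :
    ∀ k, (1 / B k) * ∑ i ∈ Finset.range (k + 1), b i * f (y i) =
      f (y 0)
      - ∑ i ∈ Finset.Icc 1 k,
          (1 / B (i - 1) - 1 / B i) * ∑ j ∈ Finset.range i, a j * D (z i) (z j)
      + ∑ i ∈ Finset.Icc 1 k, (1 / B (i - 1) - 1 / B k) * Err i := by
  have hBpos : ∀ k, 0 < B k := fun k => by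
    rw [hB]
    exact Finset.sum_pos (fun i _ => hbpos i) ⟨0, Finset.mem_range.2 (Nat.succ_pos k)⟩
  have hBne : ∀ k, B k ≠ 0 := fun k => (hBpos k).ne'
  have hC' : ∀ k, C k = B k * f (y k) - (∑ i ∈ Finset.range (k + 1), b i * f (y i))
      + ∑ j ∈ Finset.range k, a j * D (z k) (z j) := by
    intro k
    rw [hC k]
    congr 1
    rw [Finset.sum_range_succ, hD0, mul_zero, add_zero]
  have hC0 : C 0 = 0 := by
    rw [hC' 0]
    simp [hB 0]
  have hsumE : ∀ k, ∑ i ∈ Finset.Icc 1 k, Err i = C k := by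
    intro k
    induction k with
    | zero => simp [hC0]
    | succ n ih =>
      rw [Finset.sum_Icc_succ_top (Nat.le_add_left 1 n), ih, hErr (n + 1) (by omega)]
      simp
  intro k
  induction k with
  | zero =>
    rw [show Finset.Icc 1 0 = (∅ : Finset ℕ) from rfl]
    simp only [Finset.sum_empty, Finset.sum_range_one, sub_zero, add_zero]
    rw [hB 0, Finset.sum_range_one]
    field_simp [(hbpos 0).ne']
    simp
  | succ n ih =>
    rw [Finset.sum_Icc_succ_top (Nat.le_add_left 1 n),
        Finset.sum_Icc_succ_top (Nat.le_add_left 1 n)]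
    have split : ∑ i ∈ Finset.Icc 1 n, (1 / B (i - 1) - 1 / B (n + 1)) * Err i
        = (∑ i ∈ Finset.Icc 1 n, (1 / B (i - 1) - 1 / B n) * Err i)
          + (1 / B n - 1 / B (n + 1)) * C n := by
      rw [← hsumE n, Finset.mul_sum, ← Finset.sum_add_distrib]
      exact Finset.sum_congr rfl fun i _ => by ring
    rw [split, hErr (n + 1) (by omega)]
    simp only [Nat.add_sub_cancel]
    rw [hC' (n + 1)]
    have hBsucc : B (n + 1) = B n + b (n + 1) := by
      rw [hB (n + 1), hB n, Finset.sum_range_succ]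
    have hSsucc : (∑ i ∈ Finset.range (n + 1 + 1), b i * f (y i))
        = (∑ i ∈ Finset.range (n + 1), b i * f (y i)) + b (n + 1) * f (y (n + 1)) :=
      Finset.sum_range_succ _ _
    have key : 1 / B (n + 1) * ((∑ i ∈ Finset.range (n + 1), b i * f (y i)) + b (n + 1) * f (y (n + 1)))
        = 1 / B n * (∑ i ∈ Finset.range (n + 1), b i * f (y i))
          + (1 / B n - 1 / B (n + 1)) *
            (B (n + 1) * f (y (n + 1)) - ((∑ i ∈ Finset.range (n + 1), b i * f (y i)) + b (n + 1) * f (y (n + 1)))) := by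
      have h2 : B n + b (n + 1) ≠ 0 := by rw [← hBsucc]; exact hBne (n + 1)
      rw [hBsucc]
      field_simp [hBne n]
      ring
    rw [hSsucc]
    linear_combination ih + key
end

section
/- Let x_k, y_k, z_k evolve by the GMD iteration x_k = (A_{k-1}/A_k)y_{k-1} + (a_k/A_k)∇ψ*(z_{k-1}), z_k = z_{k-1} - (a_k/A_k)H_k∇f(x_k), y_k = x_k + (a_k/A_k)(∇ψ*(z_k) - ∇ψ*(z_{k-1})), started with x_0 = y_0 = ∇ψ*(z_0) and ψ μ-strongly convex. Then (1/2)‖x_k - y_{k-1}‖² ≤ (1/μ)·(a_k²/(A_k² A_{k-1}))·Σ_{i=0}^{k-2} a_i D_{ψ*}(z_{k-1}, z_i). -/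
/-- For the GMD iteration `x_k = (A_{k-1}/A_k)y_{k-1} + (a_k/A_k)∇ψ*(z_{k-1})`,
`z_k = z_{k-1} - (a_k/A_k)H_k∇f(x_k)`, `y_k = x_k + (a_k/A_k)(∇ψ*(z_k) - ∇ψ*(z_{k-1}))`,
started with `x₀ = y₀ = ∇ψ*(z₀)` and `ψ` `μ`-strongly convex, one has for every `k ≥ 1`:
`(1/2)‖x_k - y_{k-1}‖² ≤ (1/μ)(a_k²/(A_k² A_{k-1})) Σ_{i=0}^{k-2} a_i D_{ψ*}(z_{k-1}, z_i)`,
where `D_{ψ*}(w, w') = ψ*(w) - ψ*(w') - ⟨w - w', ∇ψ*(w')⟩`. -/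
theorem stmt_15 {E : Type*} [NormedAddCommGroup E] [NormedSpace ℝ E] [FiniteDimensional ℝ E]
    (μ : ℝ) (hμ : 0 < μ)
    (f : E → ℝ) (g : E → E →L[ℝ] ℝ) (hdiff : ∀ p, HasFDerivAt f (g p) p)
    (ψ : E → ℝ) (gψ : E → E →L[ℝ] ℝ) (hψdiff : ∀ p, HasFDerivAt ψ (gψ p) p)
    (hψsc : ∀ p q, ψ q ≥ ψ p + gψ p (q - p) + μ / 2 * ‖q - p‖ ^ 2)
    (ψs : (E →L[ℝ] ℝ) → ℝ) (gs : (E →L[ℝ] ℝ) → E)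
    (hψs : ∀ w, ψs w = w (gs w) - ψ (gs w))
    (hargmax : ∀ w, ∀ p, w p - ψ p ≤ w (gs w) - ψ (gs w))
    (a A H : ℕ → ℝ)
    (hapos : ∀ i, 0 < a i) (hApos : ∀ i, 0 < A i) (hHpos : ∀ i, 0 < H i)
    (hA : ∀ k, A k = ∑ i ∈ Finset.range (k + 1), a i)
    (x y : ℕ → E) (z : ℕ → E →L[ℝ] ℝ)
    (hx0 : x 0 = gs (z 0)) (hy0 : y 0 = gs (z 0))
    (hx : ∀ k ≥ 1, x k = (A (k - 1) / A k) • y (k - 1) + (a k / A k) • gs (z (k - 1)))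
    (hz : ∀ k ≥ 1, z k = z (k - 1) - ((a k / A k) * H k) • g (x k))
    (hy : ∀ k ≥ 1, y k = x k + (a k / A k) • (gs (z k) - gs (z (k - 1)))) :
    ∀ k ≥ 1,
      (1 / 2) * ‖x k - y (k - 1)‖ ^ 2 ≤
        (1 / μ) * ((a k) ^ 2 / ((A k) ^ 2 * A (k - 1))) *
          ∑ i ∈ Finset.range (k - 1),
            a i * (ψs (z (k - 1)) - ψs (z i) - (z (k - 1) - z i) (gs (z i))) := by
  -- first-order condition at the argmax
  have hfoc : ∀ w, gψ (gs w) = w := by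
    intro w
    have hmax : IsLocalMax (fun p => w p - ψ p) (gs w) :=
      Filter.Eventually.of_forall (hargmax w)
    have hd : HasFDerivAt (fun p => w p - ψ p) (w - gψ (gs w)) (gs w) :=
      w.hasFDerivAt.sub (hψdiff (gs w))
    have := hmax.hasFDerivAt_eq_zero hd
    rwa [sub_eq_zero, eq_comm] at this
  -- Bregman divergence of ψ* lower bound
  have hD : ∀ w w' : E →L[ℝ] ℝ,
      μ / 2 * ‖gs w - gs w'‖ ^ 2 ≤ ψs w - ψs w' - (w - w') (gs w') := by
    intro w w'
    have h1 := hψsc (gs w) (gs w')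
    rw [hfoc w] at h1
    have h2 : ‖gs w' - gs w‖ = ‖gs w - gs w'‖ := norm_sub_rev _ _
    rw [h2] at h1
    simp only [hψs, ContinuousLinearMap.sub_apply, map_sub] at *
    linarith
  -- y as convex combination
  have hY : ∀ m, A m • y m = ∑ i ∈ Finset.range (m + 1), a i • gs (z i) := by
    intro m
    induction m with
    | zero => simp [hy0, hA 0]
    | succ n ih =>
      have h1 := hy (n + 1) (by omega)
      have h2 := hx (n + 1) (by omega)
      simp only [Nat.add_sub_cancel] at h1 h2
      have hA1 : A (n + 1) ≠ 0 := (hApos _).ne'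
      have e : ∀ (c : ℝ) (v : E), A (n + 1) • ((c / A (n + 1)) • v) = c • v := by
        intro c v; rw [smul_smul, mul_div_cancel₀ _ hA1]
      rw [Finset.sum_range_succ, ← ih, h1, h2, smul_add, smul_add, e, e, e, smul_sub]
      abel
  intro k hk1
  set m := k - 1 with hm
  have hkm : k = m + 1 := by omega
  have hAm : 0 < A m := hApos m
  have hAk : 0 < A k := hApos k
  have hAkm : A k = A m + a k := by
    rw [hkm, hA (m + 1), hA m, Finset.sum_range_succ]
  -- x k - y m
  have hxy : x k - y m = (a k / A k) • (gs (z m) - y m) := by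
    rw [hx k hk1, ← hm]
    rw [smul_sub]
    rw [show (A m / A k) • y m + (a k / A k) • gs (z m) - y m
        = (a k / A k) • gs (z m) + (A m / A k - 1) • y m by
      rw [sub_smul, one_smul]; abel]
    rw [show A m / A k - 1 = -(a k / A k) by field_simp; linarith]
    rw [neg_smul]; abel
  have hsum : ∑ i ∈ Finset.range (m + 1), a i • (gs (z m) - gs (z i))
      = A m • (gs (z m) - y m) := by
    rw [smul_sub]
    simp only [smul_sub]
    rw [Finset.sum_sub_distrib, ← Finset.sum_smul, ← hA m, hY m]
  -- norm bound via triangle inequality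
  have hnorm : ‖x k - y m‖ ≤ (a k / (A k * A m)) *
      ∑ i ∈ Finset.range (m + 1), a i * ‖gs (z m) - gs (z i)‖ := by
    have h3 : x k - y m = (a k / (A k * A m)) •
        ∑ i ∈ Finset.range (m + 1), a i • (gs (z m) - gs (z i)) := by
      rw [hsum, hxy, smul_smul]
      congr 1
      field_simp
    have hc : (0:ℝ) ≤ a k / (A k * A m) := div_nonneg (hapos k).le (mul_pos hAk hAm).le
    rw [h3, norm_smul, Real.norm_of_nonneg hc]
    refine mul_le_mul_of_nonneg_left ?_ hc
    calc ‖∑ i ∈ Finset.range (m + 1), a i • (gs (z m) - gs (z i))‖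
        ≤ ∑ i ∈ Finset.range (m + 1), ‖a i • (gs (z m) - gs (z i))‖ :=
          norm_sum_le _ _
      _ = ∑ i ∈ Finset.range (m + 1), a i * ‖gs (z m) - gs (z i)‖ := by
          refine Finset.sum_congr rfl fun i _ => ?_
          rw [norm_smul, Real.norm_of_nonneg (hapos i).le]
  -- Cauchy-Schwarz
  have hCS : (∑ i ∈ Finset.range (m + 1), a i * ‖gs (z m) - gs (z i)‖) ^ 2
      ≤ A m * ∑ i ∈ Finset.range (m + 1), a i * ‖gs (z m) - gs (z i)‖ ^ 2 := by
    rw [hA m]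
    exact Finset.sum_sq_le_sum_mul_sum_of_sq_eq_mul _
      (fun i _ => (hapos i).le)
      (fun i _ => mul_nonneg (hapos i).le (sq_nonneg _))
      (fun i _ => by ring)
  -- last term vanishes
  have hS2 : ∑ i ∈ Finset.range (m + 1), a i * ‖gs (z m) - gs (z i)‖ ^ 2
      = ∑ i ∈ Finset.range m, a i * ‖gs (z m) - gs (z i)‖ ^ 2 := by
    rw [Finset.sum_range_succ]; simp
  -- Bregman bound on the sum
  have hS3 : ∑ i ∈ Finset.range m, a i * ‖gs (z m) - gs (z i)‖ ^ 2
      ≤ (2 / μ) * ∑ i ∈ Finset.range m,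
          a i * (ψs (z m) - ψs (z i) - (z m - z i) (gs (z i))) := by
    rw [Finset.mul_sum]
    refine Finset.sum_le_sum fun i _ => ?_
    have := hD (z m) (z i)
    have h4 : ‖gs (z m) - gs (z i)‖ ^ 2 ≤ (2 / μ) * (ψs (z m) - ψs (z i) - (z m - z i) (gs (z i))) := by
      rw [← sub_nonneg] at this ⊢
      have h5 : (2/μ) * (ψs (z m) - ψs (z i) - (z m - z i) (gs (z i))) - ‖gs (z m) - gs (z i)‖^2
          = (2/μ) * ((ψs (z m) - ψs (z i) - (z m - z i) (gs (z i))) - μ/2 * ‖gs (z m) - gs (z i)‖^2) := by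
        field_simp
      rw [h5]
      exact mul_nonneg (by positivity) this
    calc a i * ‖gs (z m) - gs (z i)‖ ^ 2
        ≤ a i * ((2 / μ) * (ψs (z m) - ψs (z i) - (z m - z i) (gs (z i)))) := by
          exact mul_le_mul_of_nonneg_left h4 (hapos i).le
      _ = 2 / μ * (a i * (ψs (z m) - ψs (z i) - (z m - z i) (gs (z i)))) := by ring
  -- combine
  have hDsum : 0 ≤ ∑ i ∈ Finset.range m,
      a i * (ψs (z m) - ψs (z i) - (z m - z i) (gs (z i))) := by
    refine Finset.sum_nonneg fun i _ => mul_nonneg (hapos i).le ?_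
    have := hD (z m) (z i)
    nlinarith [sq_nonneg ‖gs (z m) - gs (z i)‖]
  set S := ∑ i ∈ Finset.range m, a i * (ψs (z m) - ψs (z i) - (z m - z i) (gs (z i))) with hS
  set T := ∑ i ∈ Finset.range (m + 1), a i * ‖gs (z m) - gs (z i)‖ with hT
  have hT0 : 0 ≤ T := Finset.sum_nonneg fun i _ => mul_nonneg (hapos i).le (norm_nonneg _)
  have hxn : ‖x k - y m‖ ^ 2 ≤ (a k / (A k * A m)) ^ 2 * (A m * ((2 / μ) * S)) := by
    calc ‖x k - y m‖ ^ 2 ≤ ((a k / (A k * A m)) * T) ^ 2 := by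
          have h0 : 0 ≤ ‖x k - y m‖ := norm_nonneg _
          nlinarith [hnorm]
      _ = (a k / (A k * A m)) ^ 2 * T ^ 2 := by ring
      _ ≤ (a k / (A k * A m)) ^ 2 * (A m * ((2 / μ) * S)) := by
          have h6 : T ^ 2 ≤ A m * ((2 / μ) * S) := by
            calc T ^ 2 ≤ A m * ∑ i ∈ Finset.range (m + 1), a i * ‖gs (z m) - gs (z i)‖ ^ 2 := hCS
              _ = A m * ∑ i ∈ Finset.range m, a i * ‖gs (z m) - gs (z i)‖ ^ 2 := by rw [hS2]
              _ ≤ A m * ((2 / μ) * S) := by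
                  exact mul_le_mul_of_nonneg_left hS3 hAm.le
          exact mul_le_mul_of_nonneg_left h6 (sq_nonneg _)
  have hcoef : (1 / 2) * ((a k / (A k * A m)) ^ 2 * (A m * ((2 / μ) * S)))
      = (1 / μ) * ((a k) ^ 2 / ((A k) ^ 2 * A m)) * S := by
    field_simp
  calc (1 / 2) * ‖x k - y m‖ ^ 2
      ≤ (1 / 2) * ((a k / (A k * A m)) ^ 2 * (A m * ((2 / μ) * S))) := by linarith
    _ = (1 / μ) * ((a k) ^ 2 / ((A k) ^ 2 * A m)) * S := hcoef
end

section
/- Let C_k = B_k f(y_k) - Σ_{i=0}^k b_i f(y_i) + Σ_{i=0}^k a_i D_{ψ*}(z_k, z_i) with a_i, b_i > 0, A_k = Σa_i, B_k = Σb_i, B_{k-1} = H_k A_{k-1}, and let x_k, y_k, z_k follow GMD with x_0 = y_0 = ∇ψ*(z_0), ψ μ-strongly convex, f L-smooth and ε_H-weakly convex with ε_H ∈ [0, L], and (a_k/A_k)² = cμ/(L H_k) for c ∈ [0,1]. Then the discretization error E_k = C_k - C_{k-1} satisfies E_k ≤ -(1-c)A_{k-1}D_{ψ*}(z_{k-1},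 z_k) + B_{k-1}(ε_H/2)‖x_k - y_{k-1}‖². -/
/-- Descent lemma: L-Lipschitz gradient implies quadratic upper bound. -/
lemma gmd_descent {E : Type*} [NormedAddCommGroup E] [NormedSpace ℝ E]
    (L : ℝ) (hL : 0 ≤ L) (f : E → ℝ) (g : E → E →L[ℝ] ℝ)
    (hdiff : ∀ p, HasFDerivAt f (g p) p)
    (hfsmooth : ∀ p q, ‖g p - g q‖ ≤ L * ‖p - q‖) (p q : E) :
    f q ≤ f p + g p (q - p) + L / 2 * ‖q - p‖ ^ 2 := by
  set v := q - p with hv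
  have key : ∀ t : ℝ, HasDerivAt (fun t : ℝ => f (p + t • v)) ((g (p + t • v)) v) t := by
    intro t
    have h1 : HasDerivAt (fun t : ℝ => p + t • v) v t := by
      simpa using ((hasDerivAt_id t).smul_const v).const_add p
    exact (hdiff _).comp_hasDerivAt t h1
  set φ : ℝ → ℝ := fun t => f (p + t • v) - (g p v) * t - (L / 2 * ‖v‖ ^ 2) * t ^ 2 with hφ
  have hφd : ∀ t : ℝ, HasDerivAt φ
      ((g (p + t • v)) v - g p v - (L / 2 * ‖v‖ ^ 2) * (2 * t)) t := by
    intro t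
    have h2 : HasDerivAt (fun t : ℝ => (g p v) * t) (g p v) t := by
      simpa using (hasDerivAt_id t).const_mul (g p v)
    have h3 : HasDerivAt (fun t : ℝ => (L / 2 * ‖v‖ ^ 2) * t ^ 2)
        ((L / 2 * ‖v‖ ^ 2) * (2 * t)) t := by
      have h := (hasDerivAt_pow 2 t).const_mul (L / 2 * ‖v‖ ^ 2)
      simp only [pow_one, Nat.cast_ofNat] at h
      convert h using 1
      exacts [rfl, rfl, by norm_num]
    exact ((key t).sub h2).sub h3
  have hanti : AntitoneOn φ (Set.Icc (0:ℝ) 1) := by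
    apply antitoneOn_of_deriv_nonpos (convex_Icc 0 1)
    · exact fun t _ => (hφd t).continuousAt.continuousWithinAt
    · exact fun t _ => (hφd t).differentiableAt.differentiableWithinAt
    · intro t ht
      rw [interior_Icc] at ht
      rw [(hφd t).deriv]
      have hb : (g (p + t • v)) v - g p v ≤ L * t * ‖v‖ ^ 2 := by
        have h1 : (g (p + t • v) - g p) v ≤ ‖(g (p + t • v) - g p) v‖ := le_abs_self _
        have h2 : ‖(g (p + t • v) - g p) v‖ ≤ ‖g (p + t • v) - g p‖ * ‖v‖ :=
          ContinuousLinearMap.le_opNorm _ _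
        have h3 : ‖g (p + t • v) - g p‖ ≤ L * ‖t • v‖ := by
          simpa using hfsmooth (p + t • v) p
        have h4 : ‖t • v‖ = t * ‖v‖ := by
          rw [norm_smul, Real.norm_eq_abs, abs_of_pos ht.1]
        have h5 : ‖g (p + t • v) - g p‖ * ‖v‖ ≤ L * (t * ‖v‖) * ‖v‖ := by
          rw [← h4]; exact mul_le_mul_of_nonneg_right h3 (norm_nonneg v)
        have h6 : (g (p + t • v) - g p) v = (g (p + t • v)) v - g p v := rfl
        nlinarith
      nlinarith
  have h01 : φ 1 ≤ φ 0 :=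
    hanti (Set.mem_Icc.2 ⟨le_refl 0, zero_le_one⟩) (Set.mem_Icc.2 ⟨zero_le_one, le_refl 1⟩)
      zero_le_one
  have hφ0 : φ 0 = f p := by simp [hφ]
  have hφ1 : φ 1 = f q - g p v - L / 2 * ‖v‖ ^ 2 := by
    simp [hφ, hv]
  rw [hφ0, hφ1] at h01
  linarith

/-- First-order condition at the argmax defining the conjugate. -/
lemma gmd_grad_argmax {E : Type*} [NormedAddCommGroup E] [NormedSpace ℝ E]
    (ψ : E → ℝ) (gψ : E → E →L[ℝ] ℝ) (hψdiff : ∀ p, HasFDerivAt ψ (gψ p) p)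
    (gs : (E →L[ℝ] ℝ) → E)
    (hargmax : ∀ w : E →L[ℝ] ℝ, ∀ p, w p - ψ p ≤ w (gs w) - ψ (gs w))
    (w : E →L[ℝ] ℝ) : gψ (gs w) = w := by
  have hmax : IsMaxOn (fun q => w q - ψ q) Set.univ (gs w) := fun q _ => hargmax w q
  have hloc : IsLocalMax (fun q => w q - ψ q) (gs w) := hmax.isLocalMax Filter.univ_mem
  have hd : HasFDerivAt (fun q => w q - ψ q) (w - gψ (gs w)) (gs w) :=
    w.hasFDerivAt.sub (hψdiff (gs w))
  have h0 := hloc.hasFDerivAt_eq_zero hd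
  have := sub_eq_zero.mp h0
  exact this.symm


/-- Discretization-error bound for GMD: with `C_k = B_k f(y_k) - Σ_{i=0}^k b_i f(y_i) +
Σ_{i=0}^k a_i D_{ψ*}(z_k, z_i)`, `B_{k-1} = H_k A_{k-1}`, iterates following GMD started at
`x₀ = y₀ = ∇ψ*(z₀)`, `ψ` `μ`-strongly convex, `f` `L`-smooth and `ε_H`-weakly convex with
`ε_H ∈ [0, L]`, and `(a_k/A_k)² = cμ/(L H_k)` with `c ∈ [0,1]`, the error
`E_k = C_k - C_{k-1}` satisfies
`E_k ≤ -(1-c) A_{k-1} D_{ψ*}(z_{k-1}, z_k) + B_{k-1}(ε_H/2)‖x_k - y_{k-1}‖²`. -/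
theorem stmt_16 {E : Type*} [NormedAddCommGroup E] [NormedSpace ℝ E] [FiniteDimensional ℝ E]
    (μ L εH c : ℝ) (hμ : 0 < μ) (hL : 0 < L)
    (hεH : εH ∈ Set.Icc (0 : ℝ) L) (hc : c ∈ Set.Icc (0 : ℝ) 1)
    (f : E → ℝ) (g : E → E →L[ℝ] ℝ) (hdiff : ∀ p, HasFDerivAt f (g p) p)
    (hfsmooth : ∀ p q, ‖g p - g q‖ ≤ L * ‖p - q‖)
    (hfweak : ∀ p q, f q ≥ f p + g p (q - p) - εH / 2 * ‖q - p‖ ^ 2)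
    (ψ : E → ℝ) (gψ : E → E →L[ℝ] ℝ) (hψdiff : ∀ p, HasFDerivAt ψ (gψ p) p)
    (hψsc : ∀ p q, ψ q ≥ ψ p + gψ p (q - p) + μ / 2 * ‖q - p‖ ^ 2)
    (ψs : (E →L[ℝ] ℝ) → ℝ) (gs : (E →L[ℝ] ℝ) → E)
    (hψs : ∀ w, ψs w = w (gs w) - ψ (gs w))
    (hargmax : ∀ w, ∀ p, w p - ψ p ≤ w (gs w) - ψ (gs w))
    (D : (E →L[ℝ] ℝ) → (E →L[ℝ] ℝ) → ℝ)
    (hD : ∀ w w', D w w' = ψs w - ψs w' - (w - w') (gs w'))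
    (a b A B H : ℕ → ℝ)
    (hapos : ∀ i, 0 < a i) (hbpos : ∀ i, 0 < b i)
    (hApos : ∀ i, 0 < A i) (hHpos : ∀ i, 0 < H i)
    (hA : ∀ k, A k = ∑ i ∈ Finset.range (k + 1), a i)
    (hB : ∀ k, B k = ∑ i ∈ Finset.range (k + 1), b i)
    (hBH : ∀ k ≥ 1, B (k - 1) = H k * A (k - 1))
    (hstep : ∀ k ≥ 1, (a k / A k) ^ 2 = c * μ / (L * H k))
    (x y : ℕ → E) (z : ℕ → E →L[ℝ] ℝ)
    (hx0 : x 0 = gs (z 0)) (hy0 : y 0 = gs (z 0))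
    (hx : ∀ k ≥ 1, x k = (A (k - 1) / A k) • y (k - 1) + (a k / A k) • gs (z (k - 1)))
    (hz : ∀ k ≥ 1, z k = z (k - 1) - ((a k / A k) * H k) • g (x k))
    (hy : ∀ k ≥ 1, y k = x k + (a k / A k) • (gs (z k) - gs (z (k - 1))))
    (C : ℕ → ℝ)
    (hC : ∀ k, C k = B k * f (y k) - ∑ i ∈ Finset.range (k + 1), b i * f (y i)
      + ∑ i ∈ Finset.range (k + 1), a i * D (z k) (z i)) :
    ∀ k ≥ 1, C k - C (k - 1) ≤
      -(1 - c) * A (k - 1) * D (z (k - 1)) (z k)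
        + B (k - 1) * (εH / 2) * ‖x k - y (k - 1)‖ ^ 2 := by
  -- gradient of ψ at argmax points
  have hg : ∀ w, gψ (gs w) = w := gmd_grad_argmax ψ gψ hψdiff gs hargmax
  -- expanded formula for D
  have hD' : ∀ w w', D w w' = ψ (gs w') - ψ (gs w) - w (gs w') + w (gs w) := by
    intro w w'
    rw [hD, hψs, hψs, ContinuousLinearMap.sub_apply]
    ring
  -- strong-convexity lower bound for D
  have hDlb : ∀ w w', μ / 2 * ‖gs w' - gs w‖ ^ 2 ≤ D w w' := by
    intro w w'
    have h := hψsc (gs w) (gs w')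
    rw [hg w, map_sub] at h
    rw [hD' w w']
    linarith
  have hD0 : ∀ w, D w w = 0 := fun w => by rw [hD' w w]; ring
  -- key sum identity  Σ aᵢ • ∇ψ*(zᵢ) = Aₘ • yₘ
  have hsum : ∀ m, ∑ i ∈ Finset.range (m + 1), a i • gs (z i) = A m • y m := by
    intro m
    induction m with
    | zero =>
      have hA0 : A 0 = a 0 := by rw [hA]; simp
      rw [Finset.sum_range_one, hA0, hy0]
    | succ m ih =>
      rw [Finset.sum_range_succ, ih]
      have hy' : y (m + 1) = x (m + 1) + (a (m + 1) / A (m + 1)) • (gs (z (m + 1)) - gs (z m)) := by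
        have := hy (m + 1) (by omega); simpa using this
      have hx' : x (m + 1) = (A m / A (m + 1)) • y m + (a (m + 1) / A (m + 1)) • gs (z m) := by
        have := hx (m + 1) (by omega); simpa using this
      have hA1 : A (m + 1) ≠ 0 := (hApos (m + 1)).ne'
      rw [hy', hx']
      match_scalars <;> field_simp <;> ring
  intro k hk
  obtain ⟨n, rfl⟩ : ∃ n, k = n + 1 := ⟨k - 1, (Nat.succ_pred_eq_of_pos hk).symm⟩
  simp only [Nat.add_sub_cancel]
  -- specialize iteration hypotheses
  have hBH' : B n = H (n + 1) * A n := by have := hBH (n + 1) (by omega); simpa using this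
  have hx' : x (n + 1) = (A n / A (n + 1)) • y n + (a (n + 1) / A (n + 1)) • gs (z n) := by
    have := hx (n + 1) (by omega); simpa using this
  have hz' : z (n + 1) = z n - ((a (n + 1) / A (n + 1)) * H (n + 1)) • g (x (n + 1)) := by
    have := hz (n + 1) (by omega); simpa using this
  have hy' : y (n + 1) = x (n + 1)
      + (a (n + 1) / A (n + 1)) • (gs (z (n + 1)) - gs (z n)) := by
    have := hy (n + 1) (by omega); simpa using this
  have hstep' : (a (n + 1) / A (n + 1)) ^ 2 = c * μ / (L * H (n + 1)) :=
    hstep (n + 1) (by omega)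
  set τ : ℝ := a (n + 1) / A (n + 1) with hτ
  have hAn : 0 < A n := hApos n
  have hAn1 : A (n + 1) ≠ 0 := (hApos (n + 1)).ne'
  have hHn : 0 < H (n + 1) := hHpos (n + 1)
  have hBn : 0 < B n := by rw [hBH']; positivity
  have hAA : A (n + 1) = A n + a (n + 1) := by
    rw [hA (n + 1), hA n, Finset.sum_range_succ]
  -- pointwise evaluation of z_{k} = z_{k-1} - τH g(x_k)
  have hzv : ∀ v : E, (z (n + 1)) v = (z n) v - τ * H (n + 1) * (g (x (n + 1)) v) := by
    intro v
    rw [hz']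
    simp [ContinuousLinearMap.sub_apply, ContinuousLinearMap.smul_apply, smul_eq_mul]
    try ring
  -- x_{k} - y_{k-1} = τ (∇ψ*(z_{k-1}) - y_{k-1})
  have hxy : x (n + 1) - y n = τ • (gs (z n) - y n) := by
    rw [hx']
    match_scalars
    all_goals simp only [hτ]
    all_goals field_simp
    all_goals linarith [hAA]
  have hGxy : g (x (n + 1)) (x (n + 1) - y n)
      = τ * (g (x (n + 1)) (gs (z n)) - g (x (n + 1)) (y n)) := by
    rw [hxy, map_smul, map_sub, smul_eq_mul]
  -- y_{k} - x_{k} = τ (∇ψ*(z_k) - ∇ψ*(z_{k-1}))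
  have hyx : y (n + 1) - x (n + 1) = τ • (gs (z (n + 1)) - gs (z n)) := by
    rw [hy']; abel
  -- sum of D terms
  have hGsum : ∑ i ∈ Finset.range (n + 1), a i * g (x (n + 1)) (gs (z i))
      = A n * g (x (n + 1)) (y n) := by
    have h := congrArg (g (x (n + 1))) (hsum n)
    simpa [map_sum, map_smul, smul_eq_mul] using h
  have pt : ∀ i, a i * D (z (n + 1)) (z i) = a i * D (z n) (z i)
      + a i * (ψ (gs (z n)) - ψ (gs (z (n + 1)))
          + (z (n + 1)) (gs (z (n + 1))) - (z n) (gs (z n)))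
      + (τ * H (n + 1)) * (a i * g (x (n + 1)) (gs (z i))) := by
    intro i
    rw [hD' (z (n + 1)) (z i), hD' (z n) (z i), hzv (gs (z i))]
    ring
  have e4 : (∑ i ∈ Finset.range (n + 1), a i * D (z (n + 1)) (z i))
      = (∑ i ∈ Finset.range (n + 1), a i * D (z n) (z i))
        + A n * D (z (n + 1)) (z n)
        - B n * g (x (n + 1)) (x (n + 1) - y n) := by
    rw [Finset.sum_congr rfl (fun i _ => pt i)]
    rw [Finset.sum_add_distrib, Finset.sum_add_distrib, ← Finset.sum_mul, ← Finset.mul_sum,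
      hGsum, ← hA n]
    rw [hD' (z (n + 1)) (z n), hGxy, hBH', hzv (gs (z n))]
    ring
  -- e6 : B_{k-1} ⟨∇f(x_k), y_k - x_k⟩ = -(A_{k-1}(D(z_k,z_{k-1}) + D(z_{k-1},z_k)))
  have e6 : B n * g (x (n + 1)) (y (n + 1) - x (n + 1))
      = -(A n * D (z (n + 1)) (z n) + A n * D (z n) (z (n + 1))) := by
    rw [hyx, map_smul, map_sub, smul_eq_mul, hBH',
      hD' (z (n + 1)) (z n), hD' (z n) (z (n + 1)),
      hzv (gs (z (n + 1))), hzv (gs (z n))]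
    ring
  -- e7 : smoothness term controlled by c·A_{k-1}·D(z_{k-1}, z_k)
  have hnorm : ‖y (n + 1) - x (n + 1)‖ ^ 2 = τ ^ 2 * ‖gs (z (n + 1)) - gs (z n)‖ ^ 2 := by
    rw [hyx, norm_smul, mul_pow, Real.norm_eq_abs, sq_abs]
  have e7 : B n * (L / 2 * ‖y (n + 1) - x (n + 1)‖ ^ 2)
      ≤ c * (A n * D (z n) (z (n + 1))) := by
    have hD2 : μ / 2 * ‖gs (z (n + 1)) - gs (z n)‖ ^ 2 ≤ D (z n) (z (n + 1)) :=
      hDlb (z n) (z (n + 1))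
    have heq : B n * (L / 2 * ‖y (n + 1) - x (n + 1)‖ ^ 2)
        = c * (A n * (μ / 2 * ‖gs (z (n + 1)) - gs (z n)‖ ^ 2)) := by
      rw [hnorm, hBH', hstep']
      field_simp
    rw [heq]
    have : A n * (μ / 2 * ‖gs (z (n + 1)) - gs (z n)‖ ^ 2) ≤ A n * D (z n) (z (n + 1)) :=
      mul_le_mul_of_nonneg_left hD2 hAn.le
    exact mul_le_mul_of_nonneg_left this hc.1
  -- function value bounds
  have i1 : f (y (n + 1)) ≤ f (x (n + 1)) + g (x (n + 1)) (y (n + 1) - x (n + 1))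
      + L / 2 * ‖y (n + 1) - x (n + 1)‖ ^ 2 :=
    gmd_descent L hL.le f g hdiff hfsmooth (x (n + 1)) (y (n + 1))
  have i2 : f (x (n + 1)) + g (x (n + 1)) (y n - x (n + 1))
      - εH / 2 * ‖y n - x (n + 1)‖ ^ 2 ≤ f (y n) := by
    have := hfweak (x (n + 1)) (y n); linarith
  have i1' : B n * f (y (n + 1)) ≤ B n * f (x (n + 1))
      + B n * g (x (n + 1)) (y (n + 1) - x (n + 1))
      + B n * (L / 2 * ‖y (n + 1) - x (n + 1)‖ ^ 2) := by
    have h := mul_le_mul_of_nonneg_left i1 hBn.le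
    calc B n * f (y (n + 1)) ≤ B n * (f (x (n + 1)) + g (x (n + 1)) (y (n + 1) - x (n + 1))
        + L / 2 * ‖y (n + 1) - x (n + 1)‖ ^ 2) := h
      _ = _ := by ring
  have i2' : B n * f (x (n + 1)) + B n * g (x (n + 1)) (y n - x (n + 1))
      - B n * (εH / 2 * ‖y n - x (n + 1)‖ ^ 2) ≤ B n * f (y n) := by
    have h := mul_le_mul_of_nonneg_left i2 hBn.le
    calc B n * f (x (n + 1)) + B n * g (x (n + 1)) (y n - x (n + 1))
          - B n * (εH / 2 * ‖y n - x (n + 1)‖ ^ 2)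
        = B n * (f (x (n + 1)) + g (x (n + 1)) (y n - x (n + 1))
          - εH / 2 * ‖y n - x (n + 1)‖ ^ 2) := by ring
      _ ≤ B n * f (y n) := h
  have e5 : B n * g (x (n + 1)) (y n - x (n + 1))
      = -(B n * g (x (n + 1)) (x (n + 1) - y n)) := by
    rw [← neg_sub (x (n + 1)) (y n), map_neg]
    ring
  have e8 : B n * (εH / 2 * ‖y n - x (n + 1)‖ ^ 2)
      = B n * (εH / 2) * ‖x (n + 1) - y n‖ ^ 2 := by
    rw [norm_sub_rev]; ring
  have e9 : -(1 - c) * A n * D (z n) (z (n + 1))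
      = -(A n * D (z n) (z (n + 1))) + c * (A n * D (z n) (z (n + 1))) := by ring
  -- expand C (n+1) and C n
  have e1 : C (n + 1) = B n * f (y (n + 1))
      - (∑ i ∈ Finset.range (n + 1), b i * f (y i))
      + (∑ i ∈ Finset.range (n + 1), a i * D (z (n + 1)) (z i)) := by
    have hB' : B (n + 1) = B n + b (n + 1) := by
      rw [hB (n + 1), hB n, Finset.sum_range_succ]
    have hsb : ∑ i ∈ Finset.range (n + 1 + 1), b i * f (y i)
        = (∑ i ∈ Finset.range (n + 1), b i * f (y i)) + b (n + 1) * f (y (n + 1)) :=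
      Finset.sum_range_succ _ _
    have hsa : ∑ i ∈ Finset.range (n + 1 + 1), a i * D (z (n + 1)) (z i)
        = (∑ i ∈ Finset.range (n + 1), a i * D (z (n + 1)) (z i))
          + a (n + 1) * D (z (n + 1)) (z (n + 1)) :=
      Finset.sum_range_succ _ _
    rw [hC (n + 1), hsb, hsa, hB', hD0]
    ring
  have e2 := hC n
  linarith [e1, e2, e4, i1', i2', e5, e6, e7, e8, e9]
end

section
/- Let x_k, y_k, z_k evolve by GMD_B: x_k = y_{k-1} + (a_k/A_k)∇ψ*(z_{k-1}) - (a_k/(A_k A_{k-1}))Σ_{i=0}^{k-1}a_i∇ψ*(z_i); z_k = z_{k-1} - (a_k/A_k)H_k∇f(x_k); y_k = argmin_u {⟨∇f(x_k), u - x_k⟩ + (L/2)‖u - x_k‖²}, with x_0 = y_0 = ∇ψ*(z_0), ψ μ-strongly convex w.r.t. ‖·‖, f L-smooth and ε_H-weakly convex (ε_H ∈ [0,L]), B_{k-1} = H_k A_{k-1}, and (a_k/A_k)² = cμ/(LH_k), c ∈ [0,1]. Then E_k = C_k - C_{k-1} ≤ -(1-c)(B_{k-1}/(2L))‖∇f(x_k)‖_*²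 + B_{k-1}(ε_H/2)‖x_k - y_{k-1}‖², where C_k = B_k f(y_k) - Σ_{i=0}^k b_i f(y_i) + Σ_{i=0}^k a_i D_{ψ*}(z_k, z_i). -/
lemma my_descent {E : Type*} [NormedAddCommGroup E] [NormedSpace ℝ E]
    (L : ℝ) (f : E → ℝ) (g : E → E →L[ℝ] ℝ)
    (hdiff : ∀ p, HasFDerivAt f (g p) p)
    (hsm : ∀ p q, ‖g p - g q‖ ≤ L * ‖p - q‖) (p q : E) :
    f q ≤ f p + g p (q - p) + L / 2 * ‖q - p‖ ^ 2 := by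
  set v := q - p with hv
  set φ : ℝ → ℝ := fun t => L * ‖v‖ ^ 2 * t ^ 2 / 2 + t * g p v - f (p + t • v) with hφ
  have hline : ∀ t : ℝ, HasDerivAt (fun s : ℝ => p + s • v) v t := by
    intro t
    simpa using ((hasDerivAt_id t).smul_const v).const_add p
  have hφd : ∀ t : ℝ, HasDerivAt φ (L * ‖v‖ ^ 2 * t + g p v - g (p + t • v) v) t := by
    intro t
    have h1 : HasDerivAt (fun s : ℝ => f (p + s • v)) (g (p + t • v) v) t :=
      (hdiff (p + t • v)).comp_hasDerivAt t (hline t)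
    have h2 : HasDerivAt (fun s : ℝ => L * ‖v‖ ^ 2 * s ^ 2 / 2 + s * g p v)
        (L * ‖v‖ ^ 2 * t + g p v) t := by
      have h3 := ((hasDerivAt_pow 2 t).const_mul (L * ‖v‖ ^ 2)).div_const 2
      have h4 := (hasDerivAt_id t).mul_const (g p v)
      have := h3.add h4
      refine this.congr_deriv ?_
      push_cast
      ring
    exact h2.sub h1
  have hdiffφ : Differentiable ℝ φ := fun t => (hφd t).differentiableAt
  have hmono : MonotoneOn φ (Set.Icc (0:ℝ) 1) := by
    apply monotoneOn_of_deriv_nonneg (convex_Icc 0 1) hdiffφ.continuous.continuousOn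
      (hdiffφ.differentiableOn)
    intro t ht
    rw [interior_Icc] at ht
    rw [(hφd t).deriv]
    have hb := hsm (p + t • v) p
    have happ : (g (p + t • v) - g p) v ≤ ‖g (p + t • v) - g p‖ * ‖v‖ :=
      le_trans (le_abs_self _) ((g (p + t • v) - g p).le_opNorm v)
    rw [ContinuousLinearMap.sub_apply] at happ
    have hn : ‖p + t • v - p‖ = t * ‖v‖ := by
      simp [norm_smul, abs_of_pos ht.1]
    rw [hn] at hb
    nlinarith [norm_nonneg v, ht.1.le]
  have h01 := hmono (Set.left_mem_Icc.2 zero_le_one) (Set.right_mem_Icc.2 zero_le_one) zero_le_one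
  have e0 : φ 0 = -f p := by simp [hφ]
  have e1 : φ 1 = L * ‖v‖ ^ 2 / 2 + g p v - f q := by
    simp [hφ, hv]
  rw [e0, e1] at h01
  linarith

lemma my_attain {E : Type*} [NormedAddCommGroup E] [NormedSpace ℝ E] [FiniteDimensional ℝ E]
    (n : E →L[ℝ] ℝ) : ∃ u : E, ‖u‖ ≤ 1 ∧ ‖n‖ ≤ n u := by
  have hcpt : IsCompact (Metric.closedBall (0 : E) 1) := isCompact_closedBall _ _
  obtain ⟨u, hu, hmax⟩ := hcpt.exists_isMaxOn ⟨0, Metric.mem_closedBall_self zero_le_one⟩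
    n.continuous.continuousOn
  have hmem : ∀ s : E, ‖s‖ ≤ 1 → n s ≤ n u := by
    intro s hs
    exact hmax (by simpa [Metric.mem_closedBall] using hs)
  have h0 : 0 ≤ n u := by simpa using hmem 0 (by simp)
  refine ⟨u, by simpa [Metric.mem_closedBall] using hu, ?_⟩
  refine n.opNorm_le_bound h0 (fun w => ?_)
  rcases eq_or_ne w 0 with rfl | hw
  · simp
  · have hwpos : 0 < ‖w‖ := norm_pos_iff.2 hw
    have hv1 : ‖(‖w‖⁻¹ • w : E)‖ ≤ 1 := by
      rw [norm_smul, norm_inv, norm_norm, inv_mul_cancel₀ hwpos.ne']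
    have h1 := hmem _ hv1
    have h2 := hmem (-(‖w‖⁻¹ • w)) (by simpa using hv1)
    rw [map_smul, smul_eq_mul] at h1
    rw [map_neg, map_smul, smul_eq_mul] at h2
    rw [Real.norm_eq_abs, abs_le]
    have hinv : ‖w‖ * ‖w‖⁻¹ = 1 := mul_inv_cancel₀ hwpos.ne'
    have h1' := mul_le_mul_of_nonneg_left h1 hwpos.le
    have h2' := mul_le_mul_of_nonneg_left h2 hwpos.le
    constructor
    · nlinarith
    · nlinarith

set_option maxHeartbeats 1000000

/-- Discretization-error bound for GMD_B in a (possibly non-Euclidean) normed space: with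
`x_k = y_{k-1} + (a_k/A_k)∇ψ*(z_{k-1}) - (a_k/(A_k A_{k-1}))Σ_{i=0}^{k-1} a_i ∇ψ*(z_i)`,
`z_k = z_{k-1} - (a_k/A_k)H_k∇f(x_k)`,
`y_k = argmin_u {⟨∇f(x_k), u - x_k⟩ + (L/2)‖u - x_k‖²}`, started at `x₀ = y₀ = ∇ψ*(z₀)`,
`ψ` `μ`-strongly convex, `f` `L`-smooth and `ε_H`-weakly convex (`ε_H ∈ [0,L]`),
`B_{k-1} = H_k A_{k-1}`, `(a_k/A_k)² = cμ/(L H_k)` with `c ∈ [0,1]`, the error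
`E_k = C_k - C_{k-1}` of the potential
`C_k = B_k f(y_k) - Σ_{i=0}^k b_i f(y_i) + Σ_{i=0}^k a_i D_{ψ*}(z_k, z_i)` satisfies
`E_k ≤ -(1-c)(B_{k-1}/(2L))‖∇f(x_k)‖_*² + B_{k-1}(ε_H/2)‖x_k - y_{k-1}‖²`
(the dual norm `‖·‖_*` is the operator norm on `E →L[ℝ] ℝ`). -/
theorem stmt_18 {E : Type*} [NormedAddCommGroup E] [NormedSpace ℝ E] [FiniteDimensional ℝ E]
    (μ L εH c : ℝ) (hμ : 0 < μ) (hL : 0 < L)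
    (hεH : εH ∈ Set.Icc (0 : ℝ) L) (hc : c ∈ Set.Icc (0 : ℝ) 1)
    (f : E → ℝ) (g : E → E →L[ℝ] ℝ) (hdiff : ∀ p, HasFDerivAt f (g p) p)
    (hfsmooth : ∀ p q, ‖g p - g q‖ ≤ L * ‖p - q‖)
    (hfweak : ∀ p q, f q ≥ f p + g p (q - p) - εH / 2 * ‖q - p‖ ^ 2)
    (ψ : E → ℝ) (gψ : E → E →L[ℝ] ℝ) (hψdiff : ∀ p, HasFDerivAt ψ (gψ p) p)
    (hψsc : ∀ p q, ψ q ≥ ψ p + gψ p (q - p) + μ / 2 * ‖q - p‖ ^ 2)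
    (ψs : (E →L[ℝ] ℝ) → ℝ) (gs : (E →L[ℝ] ℝ) → E)
    (hψs : ∀ w, ψs w = w (gs w) - ψ (gs w))
    (hargmax : ∀ w, ∀ p, w p - ψ p ≤ w (gs w) - ψ (gs w))
    (D : (E →L[ℝ] ℝ) → (E →L[ℝ] ℝ) → ℝ)
    (hD : ∀ w w', D w w' = ψs w - ψs w' - (w - w') (gs w'))
    (a b A B H : ℕ → ℝ)
    (hapos : ∀ i, 0 < a i) (hbpos : ∀ i, 0 < b i)
    (hApos : ∀ i, 0 < A i) (hHpos : ∀ i, 0 < H i)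
    (hA : ∀ k, A k = ∑ i ∈ Finset.range (k + 1), a i)
    (hB : ∀ k, B k = ∑ i ∈ Finset.range (k + 1), b i)
    (hBH : ∀ k ≥ 1, B (k - 1) = H k * A (k - 1))
    (hstep : ∀ k ≥ 1, (a k / A k) ^ 2 = c * μ / (L * H k))
    (x y : ℕ → E) (z : ℕ → E →L[ℝ] ℝ)
    (hx0 : x 0 = gs (z 0)) (hy0 : y 0 = gs (z 0))
    (hx : ∀ k ≥ 1, x k = y (k - 1) + (a k / A k) • gs (z (k - 1))
      - (a k / (A k * A (k - 1))) • ∑ i ∈ Finset.range k, a i • gs (z i))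
    (hz : ∀ k ≥ 1, z k = z (k - 1) - ((a k / A k) * H k) • g (x k))
    (hy : ∀ k ≥ 1, ∀ u : E,
      g (x k) (y k - x k) + L / 2 * ‖y k - x k‖ ^ 2 ≤
        g (x k) (u - x k) + L / 2 * ‖u - x k‖ ^ 2)
    (C : ℕ → ℝ)
    (hC : ∀ k, C k = B k * f (y k) - ∑ i ∈ Finset.range (k + 1), b i * f (y i)
      + ∑ i ∈ Finset.range (k + 1), a i * D (z k) (z i)) :
    ∀ k ≥ 1, C k - C (k - 1) ≤
      -(1 - c) * (B (k - 1) / (2 * L)) * ‖g (x k)‖ ^ 2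
        + B (k - 1) * (εH / 2) * ‖x k - y (k - 1)‖ ^ 2 := by
  -- conjugate gradient identity
  have hgψs : ∀ w : E →L[ℝ] ℝ, gψ (gs w) = w := by
    intro w
    have hmax : IsLocalMax (fun p => w p - ψ p) (gs w) :=
      Filter.Eventually.of_forall (fun p => hargmax w p)
    have hd : HasFDerivAt (fun p => w p - ψ p) (w - gψ (gs w)) (gs w) :=
      (w.hasFDerivAt).sub (hψdiff _)
    have h0 := hmax.hasFDerivAt_eq_zero hd
    rw [sub_eq_zero] at h0
    exact h0.symm
  have hDself : ∀ w : E →L[ℝ] ℝ, D w w = 0 := by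
    intro w; rw [hD]; simp
  have hDle : ∀ w w' : E →L[ℝ] ℝ, D w w' ≤ ‖w - w'‖ ^ 2 / (2 * μ) := by
    intro w w'
    have hsc := hψsc (gs w') (gs w)
    rw [hgψs] at hsc
    have hdual : (w - w') (gs w - gs w') ≤ ‖w - w'‖ * ‖gs w - gs w'‖ :=
      le_trans (le_abs_self _) ((w - w').le_opNorm _)
    rw [hD, hψs, hψs]
    simp only [ContinuousLinearMap.sub_apply, map_sub] at *
    rw [le_div_iff₀ (by linarith : (0:ℝ) < 2 * μ)]
    nlinarith [sq_nonneg (‖w - w'‖ - μ * ‖gs w - gs w'‖), hμ, norm_nonneg (w - w'),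
      norm_nonneg (gs w - gs w')]
  intro k hk
  obtain ⟨j, rfl⟩ : ∃ j, k = j + 1 := ⟨k - 1, (Nat.succ_pred_eq_of_pos hk).symm⟩
  simp only [Nat.add_sub_cancel]
  obtain ⟨n, hn⟩ : ∃ n, n = g (x (j + 1)) := ⟨_, rfl⟩
  obtain ⟨α, hα⟩ : ∃ α, α = a (j + 1) / A (j + 1) := ⟨_, rfl⟩
  have hαpos : 0 < α := by rw [hα]; exact div_pos (hapos _) (hApos _)
  have hHp := hHpos (j + 1)
  have hAjpos := hApos j
  have hBj : B j = H (j + 1) * A j := by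
    have := hBH (j + 1) (by omega); simpa using this
  have hBjpos : 0 < B j := by rw [hBj]; positivity
  have hstep' : α ^ 2 = c * μ / (L * H (j + 1)) := by
    rw [hα]; exact hstep (j + 1) (by omega)
  have hzk : z (j + 1) = z j - (α * H (j + 1)) • n := by
    rw [hα, hn]
    have := hz (j + 1) (by omega); simpa using this
  have hzd : z (j + 1) - z j = -((α * H (j + 1)) • n) := by
    rw [hzk]; abel
  -- bound on ψs increment
  obtain ⟨P, hP⟩ : ∃ P, P = ψs (z (j + 1)) - ψs (z j) := ⟨_, rfl⟩
  have hPle : P ≤ (α * H (j + 1)) ^ 2 * ‖n‖ ^ 2 / (2 * μ)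
      - (α * H (j + 1)) * n (gs (z j)) := by
    have h1 := hDle (z (j + 1)) (z j)
    rw [hD] at h1
    rw [hzd] at h1
    have hnorm : ‖-((α * H (j + 1)) • n)‖ = (α * H (j + 1)) * ‖n‖ := by
      rw [norm_neg]
      rw [norm_smul (α * H (j + 1)) n, Real.norm_eq_abs, abs_of_pos (by positivity)]
    rw [hnorm] at h1
    simp only [ContinuousLinearMap.neg_apply, ContinuousLinearMap.smul_apply,
      smul_eq_mul] at h1
    rw [hP]
    have hsq : (α * H (j + 1) * ‖n‖) ^ 2 = (α * H (j + 1)) ^ 2 * ‖n‖ ^ 2 := by ring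
    rw [hsq] at h1
    linarith
  -- difference of the Bregman sums
  have hterm : ∀ i, a i * D (z (j + 1)) (z i) - a i * D (z j) (z i)
      = a i * P + a i * ((α * H (j + 1)) * n (gs (z i))) := by
    intro i
    have h1 : (z (j + 1) - z i) (gs (z i)) = (z j - z i) (gs (z i))
        - α * H (j + 1) * n (gs (z i)) := by
      rw [hzk]
      simp only [ContinuousLinearMap.sub_apply, ContinuousLinearMap.smul_apply, smul_eq_mul]
      ring
    rw [hD, hD, h1, hP]
    ring
  have hsum : (∑ i ∈ Finset.range (j + 1 + 1), a i * D (z (j + 1)) (z i))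
      - ∑ i ∈ Finset.range (j + 1), a i * D (z j) (z i)
      = A j * P + (α * H (j + 1)) * ∑ i ∈ Finset.range (j + 1), a i * n (gs (z i)) := by
    rw [Finset.sum_range_succ, hDself, mul_zero, add_zero, ← Finset.sum_sub_distrib]
    rw [Finset.sum_congr rfl (fun i _ => hterm i), Finset.sum_add_distrib]
    congr 1
    · rw [← Finset.sum_mul, ← hA]
    · rw [Finset.mul_sum]
      exact Finset.sum_congr rfl (fun i _ => by ring)
  -- the x-update relation
  obtain ⟨T, hT⟩ : ∃ T, T = ∑ i ∈ Finset.range (j + 1), a i * n (gs (z i)) := ⟨_, rfl⟩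
  have hxrel : n (x (j + 1) - y j) = α * n (gs (z j)) - (α / A j) * T := by
    rw [hα]
    have hxk := hx (j + 1) (by omega)
    simp only [Nat.add_sub_cancel] at hxk
    have : x (j + 1) - y j = (a (j + 1) / A (j + 1)) • gs (z j)
        - (a (j + 1) / (A (j + 1) * A j)) • ∑ i ∈ Finset.range (j + 1), a i • gs (z i) := by
      rw [hxk]; abel
    rw [this, map_sub, map_smul, map_smul, map_sum]
    simp only [map_smul, smul_eq_mul]
    rw [hT, Finset.mul_sum]
    have hdd : a (j + 1) / (A (j + 1) * A j) = a (j + 1) / A (j + 1) / A j := by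
      rw [div_div]
    rw [hdd]
    congr 1
    rw [Finset.mul_sum]
  have hTval : (α * H (j + 1)) * T
      = H (j + 1) * A j * (α * n (gs (z j))) - H (j + 1) * A j * n (x (j + 1) - y j) := by
    have h4 : (α / A j) * T = α * n (gs (z j)) - n (x (j + 1) - y j) := by
      linarith [hxrel]
    have h5 : A j * H (j + 1) * ((α / A j) * T)
        = A j * H (j + 1) * (α * n (gs (z j)) - n (x (j + 1) - y j)) := by rw [h4]
    have h6 : A j * H (j + 1) * ((α / A j) * T) = α * H (j + 1) * T := by
      field_simp
    rw [h6] at h5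
    rw [h5]; ring
  -- quadratic coefficient identity
  have hquad : A j * ((α * H (j + 1)) ^ 2 * ‖n‖ ^ 2 / (2 * μ))
      = c * (B j / (2 * L)) * ‖n‖ ^ 2 := by
    have : (α * H (j + 1)) ^ 2 = α ^ 2 * H (j + 1) ^ 2 := by ring
    rw [this, hstep', hBj]
    field_simp
  -- descent step
  have hfd : f (y (j + 1)) ≤ f (x (j + 1)) - ‖n‖ ^ 2 / (2 * L) := by
    obtain ⟨u, hu1, hu2⟩ := my_attain n
    have hyk := hy (j + 1) (by omega) (x (j + 1) - (‖n‖ / L) • u)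
    have he : x (j + 1) - (‖n‖ / L) • u - x (j + 1) = -((‖n‖ / L) • u) := by abel
    rw [he] at hyk
    have happ : n (-((‖n‖ / L) • u)) = -((‖n‖ / L) * n u) := by
      rw [map_neg, map_smul]; simp
    have hnorm2 : ‖-((‖n‖ / L) • u)‖ = (‖n‖ / L) * ‖u‖ := by
      rw [norm_neg, norm_smul, Real.norm_eq_abs, abs_of_nonneg (by positivity)]
    rw [← hn, happ, hnorm2] at hyk
    have hdesc := my_descent L f g hdiff hfsmooth (x (j + 1)) (y (j + 1))
    rw [← hn] at hdesc
    have hrhs : -((‖n‖ / L) * n u) + L / 2 * ((‖n‖ / L) * ‖u‖) ^ 2 ≤ -(‖n‖ ^ 2 / (2 * L)) := by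
      have hnn : 0 ≤ ‖n‖ := norm_nonneg n
      have h1 : (‖n‖ / L) * ‖n‖ ≤ (‖n‖ / L) * n u :=
        mul_le_mul_of_nonneg_left hu2 (by positivity)
      have h2 : ((‖n‖ / L) * ‖u‖) ^ 2 ≤ (‖n‖ / L) ^ 2 := by
        have he2 : ((‖n‖ / L) * ‖u‖) ^ 2 = (‖n‖ / L) ^ 2 * ‖u‖ ^ 2 := by ring
        rw [he2]
        have hu2' : ‖u‖ ^ 2 ≤ 1 := by nlinarith [norm_nonneg u]
        exact mul_le_of_le_one_right (sq_nonneg _) hu2'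
      have h3 : (‖n‖ / L) * ‖n‖ = ‖n‖ ^ 2 / L := by ring
      have h4 : L / 2 * (‖n‖ / L) ^ 2 = ‖n‖ ^ 2 / (2 * L) := by
        field_simp
      have h5 := mul_le_mul_of_nonneg_left h2 (by positivity : (0:ℝ) ≤ L / 2)
      have h6 : ‖n‖ ^ 2 / L = 2 * (‖n‖ ^ 2 / (2 * L)) := by
        field_simp
      linarith [h1, h3, h4, h5, h6]
    linarith [hyk, hdesc, hrhs]
  -- weak convexity step
  have hwc : f (x (j + 1)) - f (y j) ≤ n (x (j + 1) - y j)
      + εH / 2 * ‖x (j + 1) - y j‖ ^ 2 := by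
    have h1 := hfweak (x (j + 1)) (y j)
    rw [← hn] at h1
    have h2 : y j - x (j + 1) = -(x (j + 1) - y j) := by abel
    have h3 : ‖y j - x (j + 1)‖ = ‖x (j + 1) - y j‖ := norm_sub_rev _ _
    rw [h3, h2, map_neg] at h1
    linarith
  -- potential difference identity
  have hBsucc : B (j + 1) = B j + b (j + 1) := by
    rw [hB, hB, Finset.sum_range_succ]
  have hCdiff : C (j + 1) - C j = B j * (f (y (j + 1)) - f (y j))
      + (A j * P + (α * H (j + 1)) * T) := by
    rw [hC (j + 1), hC j, hBsucc, Finset.sum_range_succ (fun i => b i * f (y i))]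
    linear_combination hsum - (α * H (j + 1)) * hT
  -- assemble
  rw [hCdiff, ← hn]
  have h1 : B j * (f (y (j + 1)) - f (y j))
      ≤ B j * (n (x (j + 1) - y j) + εH / 2 * ‖x (j + 1) - y j‖ ^ 2 - ‖n‖ ^ 2 / (2 * L)) :=
    mul_le_mul_of_nonneg_left (by linarith [hfd, hwc]) hBjpos.le
  have h2 : A j * P ≤ A j * ((α * H (j + 1)) ^ 2 * ‖n‖ ^ 2 / (2 * μ)
      - (α * H (j + 1)) * n (gs (z j))) :=
    mul_le_mul_of_nonneg_left hPle hAjpos.le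
  have h3 : A j * ((α * H (j + 1)) ^ 2 * ‖n‖ ^ 2 / (2 * μ)
      - (α * H (j + 1)) * n (gs (z j)))
      = c * (B j / (2 * L)) * ‖n‖ ^ 2 - A j * ((α * H (j + 1)) * n (gs (z j))) := by
    rw [← hquad]; ring
  have hBj2 : H (j + 1) * A j = B j := hBj.symm
  rw [h3] at h2
  have halg : (α * H (j + 1)) * T = B j * (α * n (gs (z j))) - B j * n (x (j + 1) - y j) := by
    rw [hTval, hBj2]
  have hcancel : A j * ((α * H (j + 1)) * n (gs (z j))) = B j * (α * n (gs (z j))) := by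
    rw [hBj]; ring
  ring_nf at h1 h2 halg hcancel ⊢
  linarith [h1, h2, halg, hcancel]
end
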